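/- Negative identity expansion: for every negative proposition A⁻, if Γ ; · ⊢ ⟨A⁻⟩ is derivable in the focused sequent calculus for polarized intuitionistic logic, then Γ ; · ⊢ A⁻ is derivable. The proof is by structural induction on A⁻, mutually with positive identity expansion, using focal substitution. -/

import Mathlib

namespace StructuralFocalization

/- Polarized propositional intuitionistic logic -/
mutual
inductive PProp : Type
  | atom : Nat → PProp
  | down : NProp → PProp
  | bot  : PProp
  | or   : PProp → PProp → PProp
  | top  : PProp
  | and  : PProp → PProp → PProp
inductive NProp : Type
  | atom : Nat → NProp
  | up   : PProp → NProp
  | imp  : PProp → NProp → NProp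
  | top  : NProp
  | and  : NProp → NProp → NProp
end

/- Hypotheses: negative propositions or suspended positives ⟨A⁺⟩ -/
inductive Hyp : Type
  | neg  : NProp → Hyp
  | susp : PProp → Hyp

/- Succedents: A⁺, A⁻, or suspended ⟨A⁻⟩ -/
inductive Succ : Type
  | pos  : PProp → Succ
  | neg  : NProp → Succ
  | susp : NProp → Succ

abbrev Ctx := List Hyp

def Succ.stable : Succ → Prop
  | .pos _ => True
  | .susp _ => True
  | .neg _ => False

def Hyp.suspNormal : Hyp → Prop
  | .susp (PProp.atom _) => True
  | .susp _ => False
  | .neg _ => True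

def Ctx.suspNormal (Γ : Ctx) : Prop := ∀ h ∈ Γ, h.suspNormal

def Succ.suspNormal : Succ → Prop
  | .susp (NProp.atom _) => True
  | .susp _ => False
  | _ => True

/- The focused sequent calculus (Figures 3 and 4 of "Structural focalization",
   with the generalized id⁺/id⁻ rules for arbitrary suspended propositions). -/
mutual
/-- Right focus: Γ ⊢ [A⁺] -/
inductive RFoc : Ctx → PProp → Prop
  | idP {Γ A} : Hyp.susp A ∈ Γ → RFoc Γ A
  | downR {Γ A} : Inv Γ [] (Succ.neg A) → RFoc Γ (PProp.down A)
  | orR1 {Γ A B} : RFoc Γ A → RFoc Γ (PProp.or A B)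
  | orR2 {Γ A B} : RFoc Γ B → RFoc Γ (PProp.or A B)
  | topR {Γ} : RFoc Γ PProp.top
  | andR {Γ A B} : RFoc Γ A → RFoc Γ B → RFoc Γ (PProp.and A B)
/-- Inversion: Γ ; Ω ⊢ U -/
inductive Inv : Ctx → List PProp → Succ → Prop
  | focR {Γ A} : RFoc Γ A → Inv Γ [] (Succ.pos A)
  | focL {Γ A U} : Hyp.neg A ∈ Γ → Succ.stable U → LFoc Γ A U → Inv Γ [] U
  | etaP {Γ p Ω U} : Inv (Hyp.susp (PProp.atom p) :: Γ) Ω U → Inv Γ (PProp.atom p :: Ω) U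
  | downL {Γ A Ω U} : Inv (Hyp.neg A :: Γ) Ω U → Inv Γ (PProp.down A :: Ω) U
  | botL {Γ Ω U} : Inv Γ (PProp.bot :: Ω) U
  | orL {Γ A B Ω U} : Inv Γ (A :: Ω) U → Inv Γ (B :: Ω) U → Inv Γ (PProp.or A B :: Ω) U
  | topPL {Γ Ω U} : Inv Γ Ω U → Inv Γ (PProp.top :: Ω) U
  | andPL {Γ A B Ω U} : Inv Γ (A :: B :: Ω) U → Inv Γ (PProp.and A B :: Ω) U
  | etaN {Γ p} : Inv Γ [] (Succ.susp (NProp.atom p)) → Inv Γ [] (Succ.neg (NProp.atom p))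
  | upR {Γ A} : Inv Γ [] (Succ.pos A) → Inv Γ [] (Succ.neg (NProp.up A))
  | impR {Γ A B} : Inv Γ [A] (Succ.neg B) → Inv Γ [] (Succ.neg (NProp.imp A B))
  | topNR {Γ} : Inv Γ [] (Succ.neg NProp.top)
  | andNR {Γ A B} : Inv Γ [] (Succ.neg A) → Inv Γ [] (Succ.neg B) →
      Inv Γ [] (Succ.neg (NProp.and A B))
/-- Left focus: Γ ; [A⁻] ⊢ U -/
inductive LFoc : Ctx → NProp → Succ → Prop
  | idN {Γ A} : LFoc Γ A (Succ.susp A)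
  | upL {Γ A U} : Inv Γ [A] U → LFoc Γ (NProp.up A) U
  | impL {Γ A B U} : RFoc Γ A → LFoc Γ B U → LFoc Γ (NProp.imp A B) U
  | andL1 {Γ A B U} : LFoc Γ A U → LFoc Γ (NProp.and A B) U
  | andL2 {Γ A B U} : LFoc Γ B U → LFoc Γ (NProp.and A B) U
end

/- Unpolarized propositions and Kleene's G3 -/
inductive UProp : Type
  | atom : Nat → UProp
  | bot  : UProp
  | or   : UProp → UProp → UProp
  | top  : UProp
  | and  : UProp → UProp → UProp
  | imp  : UProp → UProp → UProp

inductive G3 : List UProp → UProp → Prop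
  | init {Γ p} : UProp.atom p ∈ Γ → G3 Γ (UProp.atom p)
  | botL {Γ Q} : UProp.bot ∈ Γ → G3 Γ Q
  | orR1 {Γ A B} : G3 Γ A → G3 Γ (UProp.or A B)
  | orR2 {Γ A B} : G3 Γ B → G3 Γ (UProp.or A B)
  | orL {Γ A B Q} : UProp.or A B ∈ Γ → G3 (A :: Γ) Q → G3 (B :: Γ) Q → G3 Γ Q
  | topR {Γ} : G3 Γ UProp.top
  | andR {Γ A B} : G3 Γ A → G3 Γ B → G3 Γ (UProp.and A B)
  | andL1 {Γ A B Q} : UProp.and A B ∈ Γ → G3 (A :: Γ) Q → G3 Γ Q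
  | andL2 {Γ A B Q} : UProp.and A B ∈ Γ → G3 (B :: Γ) Q → G3 Γ Q
  | impR {Γ A B} : G3 (A :: Γ) B → G3 Γ (UProp.imp A B)
  | impL {Γ A B Q} : UProp.imp A B ∈ Γ → G3 Γ A → G3 (B :: Γ) Q → G3 Γ Q

/-- G3 with an ordered auxiliary context Ψ: Γ; Ψ ⊢ Q -/
inductive G3Psi : List UProp → List UProp → UProp → Prop
  | cons {Γ P Ψ Q} : G3Psi (P :: Γ) Ψ Q → G3Psi Γ (P :: Ψ) Q
  | nil {Γ Q} : G3 Γ Q → G3Psi Γ [] Q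

/- Erasure -/
mutual
def eraseP : PProp → UProp
  | .atom p => .atom p
  | .down A => eraseN A
  | .bot => .bot
  | .or A B => .or (eraseP A) (eraseP B)
  | .top => .top
  | .and A B => .and (eraseP A) (eraseP B)
def eraseN : NProp → UProp
  | .atom p => .atom p
  | .up A => eraseP A
  | .imp A B => .imp (eraseP A) (eraseN B)
  | .top => .top
  | .and A B => .and (eraseN A) (eraseN B)
end

def eraseHyp : Hyp → UProp
  | .neg A => eraseN A
  | .susp A => eraseP A

def eraseCtx (Γ : Ctx) : List UProp := Γ.map eraseHyp

def eraseSucc : Succ → UProp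
  | .pos A => eraseP A
  | .neg A => eraseN A
  | .susp A => eraseN A

/- Auxiliary lemmas for identity expansion. -/

theorem map_cons {A : PProp} {Γ Δ : Ctx} (h : Hyp)
    (ρ : ∀ x ∈ Γ, x = Hyp.susp A ∨ x ∈ Δ) :
    ∀ x ∈ h :: Γ, x = Hyp.susp A ∨ x ∈ h :: Δ := by
  intro x hx
  rcases List.mem_cons.1 hx with rfl | hx
  · exact Or.inr (List.mem_cons_self)
  · rcases ρ x hx with e | hm
    · exact Or.inl e
    · exact Or.inr (List.mem_cons_of_mem _ hm)

theorem fam_cons {P : Ctx → Prop} (h : Hyp) {Δ : Ctx}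
    (fam : ∀ Δ', Δ ⊆ Δ' → P Δ') : ∀ Δ', (h :: Δ) ⊆ Δ' → P Δ' :=
  fun Δ' hs => fam Δ' (fun x hx => hs (List.mem_cons_of_mem _ hx))

/-- Positive focal substitution (combined with context renaming/weakening),
    proved by mutual rule induction via the recursor. -/
theorem substInv {A : PProp} {Γ : Ctx} {Ω : List PProp} {U : Succ} (d : Inv Γ Ω U) :
    ∀ Δ, (∀ x ∈ Γ, x = Hyp.susp A ∨ x ∈ Δ) →
      (∀ Δ', Δ ⊆ Δ' → RFoc Δ' A) → Inv Δ Ω U := by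
  refine Inv.rec
    (motive_1 := fun Γ B _ => ∀ Δ, (∀ x ∈ Γ, x = Hyp.susp A ∨ x ∈ Δ) →
      (∀ Δ', Δ ⊆ Δ' → RFoc Δ' A) → RFoc Δ B)
    (motive_2 := fun Γ Ω U _ => ∀ Δ, (∀ x ∈ Γ, x = Hyp.susp A ∨ x ∈ Δ) →
      (∀ Δ', Δ ⊆ Δ' → RFoc Δ' A) → Inv Δ Ω U)
    (motive_3 := fun Γ B U _ => ∀ Δ, (∀ x ∈ Γ, x = Hyp.susp A ∨ x ∈ Δ) →
      (∀ Δ', Δ ⊆ Δ' → RFoc Δ' A) → LFoc Δ B U)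
    ?_ ?_ ?_ ?_ ?_ ?_ ?_ ?_ ?_ ?_ ?_ ?_ ?_ ?_ ?_ ?_ ?_ ?_ ?_ ?_ ?_ ?_ ?_ ?_ d
  · intro Γ B h Δ ρ fam
    rcases ρ _ h with e | hm
    · cases e; exact fam Δ (fun _ hx => hx)
    · exact RFoc.idP hm
  · intro Γ N _ ih Δ ρ fam; exact RFoc.downR (ih Δ ρ fam)
  · intro Γ P Q _ ih Δ ρ fam; exact RFoc.orR1 (ih Δ ρ fam)
  · intro Γ P Q _ ih Δ ρ fam; exact RFoc.orR2 (ih Δ ρ fam)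
  · intro Γ Δ ρ fam; exact RFoc.topR
  · intro Γ P Q _ _ ih1 ih2 Δ ρ fam; exact RFoc.andR (ih1 Δ ρ fam) (ih2 Δ ρ fam)
  · intro Γ P _ ih Δ ρ fam; exact Inv.focR (ih Δ ρ fam)
  · intro Γ N V h st _ ih Δ ρ fam
    rcases ρ _ h with e | hm
    · exact Hyp.noConfusion e
    · exact Inv.focL hm st (ih Δ ρ fam)
  · intro Γ p Ω V _ ih Δ ρ fam
    exact Inv.etaP (ih _ (map_cons _ ρ) (fam_cons _ fam))
  · intro Γ N Ω V _ ih Δ ρ fam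
    exact Inv.downL (ih _ (map_cons _ ρ) (fam_cons _ fam))
  · intro Γ Ω V Δ ρ fam; exact Inv.botL
  · intro Γ P Q Ω V _ _ ih1 ih2 Δ ρ fam; exact Inv.orL (ih1 Δ ρ fam) (ih2 Δ ρ fam)
  · intro Γ Ω V _ ih Δ ρ fam; exact Inv.topPL (ih Δ ρ fam)
  · intro Γ P Q Ω V _ ih Δ ρ fam; exact Inv.andPL (ih Δ ρ fam)
  · intro Γ p _ ih Δ ρ fam; exact Inv.etaN (ih Δ ρ fam)
  · intro Γ P _ ih Δ ρ fam; exact Inv.upR (ih Δ ρ fam)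
  · intro Γ P N _ ih Δ ρ fam; exact Inv.impR (ih Δ ρ fam)
  · intro Γ Δ ρ fam; exact Inv.topNR
  · intro Γ M N _ _ ih1 ih2 Δ ρ fam; exact Inv.andNR (ih1 Δ ρ fam) (ih2 Δ ρ fam)
  · intro Γ N Δ ρ fam; exact LFoc.idN
  · intro Γ P V _ ih Δ ρ fam; exact LFoc.upL (ih Δ ρ fam)
  · intro Γ P N V _ _ ihr ihl Δ ρ fam; exact LFoc.impL (ihr Δ ρ fam) (ihl Δ ρ fam)
  · intro Γ M N V _ ih Δ ρ fam; exact LFoc.andL1 (ih Δ ρ fam)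
  · intro Γ M N V _ ih Δ ρ fam; exact LFoc.andL2 (ih Δ ρ fam)

/-- Weakening, as an instance of substitution with A := ⊤⁺. -/
theorem weakInv {Γ Δ : Ctx} {Ω : List PProp} {U : Succ} (sub : Γ ⊆ Δ) (d : Inv Γ Ω U) :
    Inv Δ Ω U :=
  substInv (A := PProp.top) d Δ (fun _ hx => Or.inr (sub hx)) (fun _ _ => RFoc.topR)

/-- Negative focal substitution, by mutual rule induction. -/
theorem negSubstInv {C : NProp} {U : Succ} (hU : U.stable) {Γ : Ctx} {Ω : List PProp}
    (d : Inv Γ Ω (Succ.susp C)) (fam : ∀ Γ', Γ ⊆ Γ' → LFoc Γ' C U) : Inv Γ Ω U := by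
  refine Inv.rec
    (motive_1 := fun _ _ _ => True)
    (motive_2 := fun Γ Ω V _ => V = Succ.susp C →
      (∀ Γ', Γ ⊆ Γ' → LFoc Γ' C U) → Inv Γ Ω U)
    (motive_3 := fun Γ B V _ => V = Succ.susp C →
      (∀ Γ', Γ ⊆ Γ' → LFoc Γ' C U) → LFoc Γ B U)
    ?_ ?_ ?_ ?_ ?_ ?_ ?_ ?_ ?_ ?_ ?_ ?_ ?_ ?_ ?_ ?_ ?_ ?_ ?_ ?_ ?_ ?_ ?_ ?_ d rfl fam
  · intro Γ B h; trivial
  · intro Γ N _ _; trivial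
  · intro Γ P Q _ _; trivial
  · intro Γ P Q _ _; trivial
  · intro Γ; trivial
  · intro Γ P Q _ _ _ _; trivial
  · intro Γ P _ _ e; exact Succ.noConfusion e
  · intro Γ N V h st _ ih e fam'; exact Inv.focL h hU (ih e fam')
  · intro Γ p Ω V _ ih e fam'; exact Inv.etaP (ih e (fam_cons _ fam'))
  · intro Γ N Ω V _ ih e fam'; exact Inv.downL (ih e (fam_cons _ fam'))
  · intro Γ Ω V e fam'; exact Inv.botL
  · intro Γ P Q Ω V _ _ ih1 ih2 e fam'; exact Inv.orL (ih1 e fam') (ih2 e fam')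
  · intro Γ Ω V _ ih e fam'; exact Inv.topPL (ih e fam')
  · intro Γ P Q Ω V _ ih e fam'; exact Inv.andPL (ih e fam')
  · intro Γ p _ _ e; exact Succ.noConfusion e
  · intro Γ P _ _ e; exact Succ.noConfusion e
  · intro Γ P N _ _ e; exact Succ.noConfusion e
  · intro Γ e; exact Succ.noConfusion e
  · intro Γ M N _ _ _ _ e; exact Succ.noConfusion e
  · intro Γ N e fam'; cases e; exact fam' _ (fun _ hx => hx)
  · intro Γ P V _ ih e fam'; exact LFoc.upL (ih e fam')
  · intro Γ P N V r _ _ ih e fam'; exact LFoc.impL r (ih e fam')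
  · intro Γ M N V _ ih e fam'; exact LFoc.andL1 (ih e fam')
  · intro Γ M N V _ ih e fam'; exact LFoc.andL2 (ih e fam')

/- Identity expansion, by mutual induction on the proposition. -/
mutual
theorem etaPos : ∀ (A : PProp) {Γ : Ctx} {Ω : List PProp} {U : Succ},
    Inv (Hyp.susp A :: Γ) Ω U → Inv Γ (A :: Ω) U
  | .atom _, _, _, _, d => Inv.etaP d
  | .down N, Γ, _, _, d =>
      Inv.downL (substInv d (Hyp.neg N :: Γ)
        (by
          intro x hx
          rcases List.mem_cons.1 hx with rfl | hx
          · exact Or.inl rfl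
          · exact Or.inr (List.mem_cons_of_mem _ hx))
        (fun Δ' hs => RFoc.downR (etaNeg N
          (Inv.focL (hs (List.mem_cons_self)) trivial LFoc.idN))))
  | .bot, _, _, _, _ => Inv.botL
  | .or A B, Γ, _, _, d =>
      Inv.orL
        (etaPos A (substInv d (Hyp.susp A :: Γ)
          (by
            intro x hx
            rcases List.mem_cons.1 hx with rfl | hx
            · exact Or.inl rfl
            · exact Or.inr (List.mem_cons_of_mem _ hx))
          (fun Δ' hs => RFoc.orR1 (RFoc.idP (hs (List.mem_cons_self))))))
        (etaPos B (substInv d (Hyp.susp B :: Γ)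
          (by
            intro x hx
            rcases List.mem_cons.1 hx with rfl | hx
            · exact Or.inl rfl
            · exact Or.inr (List.mem_cons_of_mem _ hx))
          (fun Δ' hs => RFoc.orR2 (RFoc.idP (hs (List.mem_cons_self))))))
  | .top, Γ, _, _, d =>
      Inv.topPL (substInv d Γ
        (by
          intro x hx
          rcases List.mem_cons.1 hx with rfl | hx
          · exact Or.inl rfl
          · exact Or.inr hx)
        (fun _ _ => RFoc.topR))
  | .and A B, Γ, _, _, d =>
      Inv.andPL (etaPos A (etaPos B (substInv d (Hyp.susp B :: Hyp.susp A :: Γ)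
        (by
          intro x hx
          rcases List.mem_cons.1 hx with rfl | hx
          · exact Or.inl rfl
          · exact Or.inr (List.mem_cons_of_mem _ (List.mem_cons_of_mem _ hx)))
        (fun Δ' hs => RFoc.andR
          (RFoc.idP (hs (List.mem_cons_of_mem _ (List.mem_cons_self))))
          (RFoc.idP (hs (List.mem_cons_self)))))))

theorem etaNeg : ∀ (A : NProp) {Γ : Ctx},
    Inv Γ [] (Succ.susp A) → Inv Γ [] (Succ.neg A)
  | .atom _, _, d => Inv.etaN d
  | .up A, _, d =>
      Inv.upR (negSubstInv (U := Succ.pos A) trivial d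
        (fun Γ' _ => LFoc.upL (etaPos A
          (Inv.focR (RFoc.idP (List.mem_cons_self))))))
  | .imp A B, Γ, d =>
      Inv.impR (etaPos A (etaNeg B (negSubstInv (U := Succ.susp B) trivial
        (weakInv (fun _ hx => List.mem_cons_of_mem _ hx) d)
        (fun Γ' hs => LFoc.impL (RFoc.idP (hs (List.mem_cons_self))) LFoc.idN))))
  | .top, _, _ => Inv.topNR
  | .and A B, _, d =>
      Inv.andNR
        (etaNeg A (negSubstInv (U := Succ.susp A) trivial d (fun Γ' _ => LFoc.andL1 LFoc.idN)))
        (etaNeg B (negSubstInv (U := Succ.susp B) trivial d (fun Γ' _ => LFoc.andL2 LFoc.idN)))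
end

/-- Negative identity expansion. -/
theorem negative_identity_expansion :
    ∀ (A : NProp) (Γ : Ctx),
      Inv Γ [] (Succ.susp A) → Inv Γ [] (Succ.neg A) :=
  fun A Γ d => etaNeg A d

end StructuralFocalization
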